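/- Let a and b be coprime positive integers and let p ∈ ℂ[x,y] be a nonzero quasihomogeneous polynomial of type (d; a, b). Then there exist a nonzero constant c ∈ ℂ, natural numbers e, l, k, and nonzero complex numbers α_1, …, α_k such that p = c · x^e · y^l · ∏_{i=1}^{k} (y^a − α_i x^b); consequently d = e·a + l·b + k·a·b. Moreover, if p is squarefree, then e ≤ 1, l ≤ 1 and the α_i are pairwise distinct. -/

import Mathlib

open MvPolynomial



noncomputable def Hg (u v : MvPolynomial (Fin 2) ℂ) (k : ℕ) (q : Polynomial ℂ) :
    MvPolynomial (Fin 2) ℂ :=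
  ∑ s ∈ Finset.range (k + 1), C (q.coeff s) * u ^ s * v ^ (k - s)

lemma Hg_step (u v : MvPolynomial (Fin 2) ℂ) (k : ℕ) (q : Polynomial ℂ)
    (hq : q.natDegree ≤ k) (β : ℂ) :
    Hg u v (k + 1) ((Polynomial.X - Polynomial.C β) * q)
      = (u - C β * v) * Hg u v k q := by
  have hc : ∀ s, ((Polynomial.X - Polynomial.C β) * q).coeff s
      = (Polynomial.X * q).coeff s - β * q.coeff s := by
    intro s
    rw [sub_mul, Polynomial.coeff_sub, Polynomial.coeff_C_mul]
  unfold Hg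
  simp only [hc]
  simp only [map_sub, map_mul, sub_mul]
  rw [Finset.sum_sub_distrib]
  congr 1
  · rw [Finset.sum_range_succ']
    have h0 : (Polynomial.X * q).coeff 0 = 0 := by
      rw [Polynomial.mul_coeff_zero, Polynomial.coeff_X_zero, zero_mul]
    rw [h0, map_zero, zero_mul, zero_mul, add_zero, Finset.mul_sum]
    apply Finset.sum_congr rfl
    intro s _
    rw [Polynomial.coeff_X_mul]
    have : k + 1 - (s + 1) = k - s := by omega
    rw [this]
    ring
  · rw [Finset.sum_range_succ]
    have h1 : q.coeff (k + 1) = 0 :=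
      Polynomial.coeff_eq_zero_of_natDegree_lt (by omega)
    rw [h1, map_zero, mul_zero, zero_mul, zero_mul, add_zero, Finset.mul_sum]
    apply Finset.sum_congr rfl
    intro s hs
    rw [Finset.mem_range] at hs
    have : k + 1 - s = (k - s) + 1 := by omega
    rw [this, pow_succ]
    ring

lemma Hg_prod (u v : MvPolynomial (Fin 2) ℂ) :
    ∀ (L : List ℂ) (c : ℂ),
      Hg u v L.length (Polynomial.C c *
          (L.map (fun β => Polynomial.X - Polynomial.C β)).prod)
        = C c * (L.map (fun β => u - C β * v)).prod := by
  intro L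
  induction L with
  | nil =>
      intro c
      simp [Hg]
  | cons β L ih =>
      intro c
      have hdeg : (Polynomial.C c *
          (L.map (fun β => Polynomial.X - Polynomial.C β)).prod).natDegree ≤ L.length := by
        refine le_trans (Polynomial.natDegree_mul_le) ?_
        have h2 : ((Multiset.map (fun x => Polynomial.X - Polynomial.C x) (↑L : Multiset ℂ)).prod).natDegree
            = Multiset.card (↑L : Multiset ℂ) :=
          Polynomial.natDegree_multiset_prod_X_sub_C_eq_card _
        simp only [Multiset.map_coe, Multiset.prod_coe, Multiset.coe_card] at h2
        simp [h2]
      have hre : Polynomial.C c *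
            ((β :: L).map (fun β => Polynomial.X - Polynomial.C β)).prod
          = (Polynomial.X - Polynomial.C β) *
            (Polynomial.C c * (L.map (fun β => Polynomial.X - Polynomial.C β)).prod) := by
        simp [List.prod_cons]; ring
      rw [List.length_cons, hre, Hg_step u v L.length _ hdeg β, ih c]
      simp [List.prod_cons]; ring


lemma fin2_decomp (m : Fin 2 →₀ ℕ) :
    m = Finsupp.single 0 (m 0) + Finsupp.single 1 (m 1) := by
  ext i
  fin_cases i <;> simp [Finsupp.single_apply]

lemma mono_eq (i j : ℕ) (c : ℂ) :
    (monomial (Finsupp.single (0 : Fin 2) i + Finsupp.single 1 j)) c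
      = C c * X 0 ^ i * X 1 ^ j := by
  rw [X_pow_eq_monomial, X_pow_eq_monomial, mul_assoc, monomial_mul, C_mul_monomial,
    mul_one, mul_one]


/-- Let `a` and `b` be coprime positive integers and let
`p ∈ ℂ[x,y]` be a nonzero quasihomogeneous polynomial of type `(d; a, b)`
(i.e. every monomial `x^i y^j` of `p` satisfies `i·a + j·b = d`). Then there
exist a nonzero constant `c`, natural numbers `e, l, k` and nonzero complex
numbers `α₁, …, α_k` such that
`p = c · x^e · y^l · ∏ i, (y^a − α_i x^b)`, and consequently
`d = e·a + l·b + k·a·b`. Moreover, if `p` is squarefree then `e ≤ 1`, `l ≤ 1`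
and the `α_i` are pairwise distinct. -/
theorem stmt0 (a b d : ℕ) (ha : 0 < a) (hb : 0 < b) (hab : Nat.Coprime a b)
    (p : MvPolynomial (Fin 2) ℂ) (hp : p ≠ 0)
    (hqh : ∀ m ∈ p.support, m 0 * a + m 1 * b = d) :
    ∃ (c : ℂ) (e l k : ℕ) (α : Fin k → ℂ), c ≠ 0 ∧ (∀ i, α i ≠ 0) ∧
      p = C c * X 0 ^ e * X 1 ^ l * ∏ i, (X 1 ^ a - C (α i) * X 0 ^ b) ∧
      d = e * a + l * b + k * (a * b) ∧
      (Squarefree p → e ≤ 1 ∧ l ≤ 1 ∧ Function.Injective α) := by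
  have hS : p.support.Nonempty := by
    rw [Finset.nonempty_iff_ne_empty, Ne, MvPolynomial.support_eq_empty]; exact hp
  obtain ⟨me, hmeS, hme⟩ := p.support.exists_min_image (fun m => m 0) hS
  obtain ⟨ml, hmlS, hml⟩ := p.support.exists_min_image (fun m => m 1) hS
  set e := me 0 with he
  set l := ml 1 with hl
  have key : ∀ m ∈ p.support, ∃ s, m 0 = e + s * b ∧ m 1 + s * a = me 1 := by
    intro m hm
    have h1 := hqh m hm
    have h2 := hqh me hmeS
    have h3 : e ≤ m 0 := hme m hm
    have h5 : m 1 ≤ me 1 := by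
      rcases le_or_gt (m 1) (me 1) with h | h
      · exact h
      · exfalso
        have h6 : e * a ≤ m 0 * a := Nat.mul_le_mul_right _ h3
        have h7 : me 1 * b < m 1 * b := Nat.mul_lt_mul_of_lt_of_le h (le_refl b) hb
        rw [← he] at h2
        linarith
    have hcancel : (m 0 - e) * a = (me 1 - m 1) * b := by
      have h6 : e * a ≤ m 0 * a := Nat.mul_le_mul_right _ h3
      have h8 : m 1 * b ≤ me 1 * b := Nat.mul_le_mul_right _ h5
      zify [h3, h5]
      rw [← he] at h2
      have h1' : (m 0 : ℤ) * a + m 1 * b = d := by exact_mod_cast h1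
      have h2' : (e : ℤ) * a + me 1 * b = d := by exact_mod_cast h2
      linarith
    have hdvd : b ∣ (m 0 - e) * a := ⟨me 1 - m 1, hcancel.trans (mul_comm _ _)⟩
    obtain ⟨s, hs⟩ := (hab.symm.dvd_of_dvd_mul_right hdvd)
    have hs' : m 0 - e = s * b := hs.trans (mul_comm _ _)
    refine ⟨s, by omega, ?_⟩
    rw [hs] at hcancel
    -- (b*s)*a = (me1 - m1)*b  ⇒ s*a = me1 - m1
    have : s * a = me 1 - m 1 := by
      have hb' : b * (s * a) = b * (me 1 - m 1) := by
        calc b * (s * a) = b * s * a := by ring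
        _ = (me 1 - m 1) * b := hcancel
        _ = b * (me 1 - m 1) := by ring
      exact Nat.eq_of_mul_eq_mul_left hb hb'
    omega
  -- define k
  obtain ⟨k, hk0, hk1⟩ := key ml hmlS
  -- hk0 : ml 0 = e + k * b, hk1 : l + k * a = me 1
  rw [← hl] at hk1
  have hme1 : me 1 = l + k * a := hk1.symm
  -- monomial skeleton
  set md : ℕ → (Fin 2 →₀ ℕ) :=
    fun s => Finsupp.single 0 (e + s * b) + Finsupp.single 1 (l + (k - s) * a) with hmd
  have hmd0 : ∀ s, (md s) 0 = e + s * b := by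
    intro s; simp [hmd, Finsupp.single_apply]
  have hmd1 : ∀ s, (md s) 1 = l + (k - s) * a := by
    intro s; simp [hmd, Finsupp.single_apply]
  have claim : ∀ m ∈ p.support, ∃ s ≤ k, m = md s := by
    intro m hm
    obtain ⟨s, hs0, hs1⟩ := key m hm
    have hsl : l ≤ m 1 := hml m hm
    have hsk : s ≤ k := by
      have : s * a ≤ k * a := by omega
      exact Nat.le_of_mul_le_mul_right this ha
    refine ⟨s, hsk, ?_⟩
    have hm1 : m 1 = l + (k - s) * a := by
      have hsub : (k - s) * a = k * a - s * a := Nat.sub_mul _ _ _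
      have hle : s * a ≤ k * a := Nat.mul_le_mul_right _ hsk
      omega
    rw [fin2_decomp m, hs0, hm1, hmd]
  -- injectivity of md
  have mdinj : ∀ s t : ℕ, md s = md t → s = t := by
    intro s t hst
    have := congrArg (fun f => f 0) hst
    simp only [hmd0] at this
    have hb1 : 1 ≤ b := hb
    nlinarith [this]
  -- representation of p as a sum
  have hrep : p = ∑ s ∈ Finset.range (k + 1), (monomial (md s)) (coeff (md s) p) := by
    apply MvPolynomial.ext
    intro m
    rw [coeff_sum]
    simp only [coeff_monomial]
    by_cases hm : m ∈ p.support
    · obtain ⟨s, hsk, rfl⟩ := claim m hm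
      rw [Finset.sum_eq_single s]
      · rw [if_pos rfl]
      · intro t ht htn
        rw [if_neg]
        intro hcon
        exact htn (mdinj t s hcon)
      · intro hcon
        exact absurd (Finset.mem_range.mpr (by omega)) hcon
    · have hz : coeff m p = 0 := by rwa [MvPolynomial.mem_support_iff, not_not] at hm
      rw [hz]
      symm
      apply Finset.sum_eq_zero
      intro t _
      split_ifs with hEq
      · rw [hEq]; exact hz
      · rfl
  -- the univariate polynomial
  set cs : ℕ → ℂ := fun s => coeff (md s) p with hcs
  set q : Polynomial ℂ :=
    ∑ s ∈ Finset.range (k + 1), Polynomial.C (cs s) * Polynomial.X ^ s with hq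
  have hqcoeff : ∀ s ∈ Finset.range (k + 1), q.coeff s = cs s := by
    intro s hs
    rw [hq, Polynomial.finset_sum_coeff]
    rw [Finset.sum_eq_single s]
    · simp
    · intro t ht htn
      rw [Polynomial.coeff_C_mul, Polynomial.coeff_X_pow, if_neg (fun h => htn h.symm), mul_zero]
    · intro hcon; exact absurd hs hcon
  have hmdme : md 0 = me := by
    rw [fin2_decomp me, hmd]
    simp only [← he, hme1]
    norm_num
  have hmdml : md k = ml := by
    rw [fin2_decomp ml, hmd]
    simp only [← hl, hk0]
    norm_num
  have hc0 : cs 0 ≠ 0 := by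
    rw [hcs]
    simp only [hmdme]
    rwa [← MvPolynomial.mem_support_iff]
  have hck : cs k ≠ 0 := by
    rw [hcs]
    simp only [hmdml]
    rwa [← MvPolynomial.mem_support_iff]
  have hq0 : q.coeff 0 = cs 0 := hqcoeff 0 (Finset.mem_range.mpr (by omega))
  have hqk : q.coeff k = cs k := hqcoeff k (Finset.mem_range.mpr (by omega))
  have hqdeg : q.natDegree = k := by
    apply le_antisymm
    · rw [hq]
      refine le_trans (Polynomial.natDegree_sum_le _ _) ?_
      rw [Finset.fold_max_le]
      constructor
      · omega
      · intro s hs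
        rw [Finset.mem_range] at hs
        refine le_trans (Polynomial.natDegree_mul_le) ?_
        simp only [Polynomial.natDegree_C, Polynomial.natDegree_X_pow, Function.comp]
        omega
    · exact Polynomial.le_natDegree_of_ne_zero (by rw [hqk]; exact hck)
  have hqne : q ≠ 0 := fun h => hc0 (by rw [← hq0, h, Polynomial.coeff_zero])
  have hsplits := IsAlgClosed.splits q
  have hcard : Multiset.card q.roots = k := by
    rw [Polynomial.splits_iff_card_roots.mp hsplits, hqdeg]
  have hlead : q.leadingCoeff = cs k := by
    rw [Polynomial.leadingCoeff, hqdeg, hqk]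
  have hfact : q = Polynomial.C (cs k) *
      (Multiset.map (fun β => Polynomial.X - Polynomial.C β) q.roots).prod := by
    rw [← hlead]
    exact hsplits.eq_prod_roots
  have hroots0 : ∀ β ∈ q.roots, β ≠ 0 := by
    intro β hβ h0
    have : Polynomial.eval β q = 0 := (Polynomial.mem_roots hqne).mp hβ
    rw [h0, ← Polynomial.coeff_zero_eq_eval_zero, hq0] at this
    exact hc0 this
  -- list of roots
  set L : List ℂ := q.roots.toList with hLdef
  have hML : (↑L : Multiset ℂ) = q.roots := Multiset.coe_toList _
  have hLlen : L.length = k := by rw [hLdef, Multiset.length_toList, hcard]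
  set α : Fin k → ℂ := fun i => (L.get (Fin.cast hLlen.symm i))⁻¹ with hα
  have hLmem : ∀ i : Fin L.length, L.get i ∈ q.roots := by
    intro i
    rw [← hML, Multiset.mem_coe]
    exact List.get_mem L i
  have hαne : ∀ i, α i ≠ 0 := fun i => inv_ne_zero (hroots0 _ (hLmem _))
  set U : MvPolynomial (Fin 2) ℂ := X 0 ^ b with hUdef
  set V : MvPolynomial (Fin 2) ℂ := X 1 ^ a with hVdef
  have hstepA : p = X 0 ^ e * X 1 ^ l * Hg U V k q := by
    rw [hrep]
    unfold Hg
    rw [Finset.mul_sum]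
    apply Finset.sum_congr rfl
    intro s hs
    rw [hqcoeff s hs]
    simp only [hmd]
    rw [mono_eq, hUdef, hVdef]
    ring
  have hstepB : Hg U V k q = C (cs k) * (L.map (fun β => U - C β * V)).prod := by
    have h1 : (Multiset.map (fun β => Polynomial.X - Polynomial.C β) q.roots).prod
        = (L.map (fun β => Polynomial.X - Polynomial.C β)).prod := by
      rw [← hML, Multiset.map_coe, Multiset.prod_coe]
    have h2 := Hg_prod U V L (cs k)
    rw [hLlen, ← h1, ← hfact] at h2
    exact h2
  have hlistprod : ∀ (g : ℂ → MvPolynomial (Fin 2) ℂ),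
      (L.map g).prod = ∏ i : Fin L.length, g (L.get i) := by
    intro g
    conv_lhs => rw [← List.ofFn_get L]
    rw [List.map_ofFn, List.prod_ofFn]
    rfl
  have heval : cs 0 = cs k * (L.map (fun β => -β)).prod := by
    have h2 := congrArg (Polynomial.eval 0) hfact
    rw [← Polynomial.coeff_zero_eq_eval_zero, hq0, Polynomial.eval_mul,
      Polynomial.eval_C, ← hML, Multiset.map_coe, Multiset.prod_coe,
      Polynomial.eval_list_prod, List.map_map] at h2
    simp only [Function.comp_def, Polynomial.eval_sub, Polynomial.eval_X,
      Polynomial.eval_C, zero_sub] at h2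
    exact h2
  have hfin : ∏ i : Fin k, (V - C (α i) * U)
      = ∏ j : Fin L.length, (V - C ((L.get j)⁻¹) * U) := by
    apply Fintype.prod_equiv (finCongr hLlen.symm)
    intro j
    rfl
  have hstepC : C (cs k) * (L.map (fun β => U - C β * V)).prod
      = C (cs 0) * ∏ i, (V - C (α i) * U) := by
    rw [hlistprod, heval, map_mul, hfin]
    have hCprod : (C ((L.map (fun β => -β)).prod) : MvPolynomial (Fin 2) ℂ)
        = ∏ j : Fin L.length, (-C (L.get j)) := by
      rw [map_list_prod, List.map_map]
      have : (C : ℂ →+* MvPolynomial (Fin 2) ℂ) ∘ (fun β => -β) = fun β => -C β := by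
        funext β; simp
      rw [this, hlistprod (fun β => -C β)]
    rw [hCprod, mul_assoc, ← Finset.prod_mul_distrib]
    congr 1
    apply Finset.prod_congr rfl
    intro j _
    have hβ : L.get j ≠ 0 := hroots0 _ (hLmem j)
    have hCC : (C (L.get j) : MvPolynomial (Fin 2) ℂ) * C ((L.get j)⁻¹) = 1 := by
      rw [← map_mul, mul_inv_cancel₀ hβ, map_one]
    linear_combination -U * hCC
  have hfinal : p = C (cs 0) * X 0 ^ e * X 1 ^ l * ∏ i, (X 1 ^ a - C (α i) * X 0 ^ b) := by
    rw [hstepA, hstepB, hstepC]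
    rw [hUdef, hVdef]
    ring
  refine ⟨cs 0, e, l, k, α, hc0, hαne, hfinal, ?_, ?_⟩
  · have h2 := hqh me hmeS
    rw [← he, hme1] at h2
    rw [← h2]; ring
  · intro hsq
    refine ⟨?_, ?_, ?_⟩
    · by_contra hcon
      push_neg at hcon
      have hpow : (X 0 : MvPolynomial (Fin 2) ℂ) ^ e = X 0 ^ (e - 2) * X 0 ^ 2 := by
        rw [← pow_add]; congr 1; omega
      have hdvd : (X 0 : MvPolynomial (Fin 2) ℂ) * X 0 ∣ p := by
        refine ⟨C (cs 0) * X 0 ^ (e - 2) * X 1 ^ l *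
          ∏ i, (X 1 ^ a - C (α i) * X 0 ^ b), ?_⟩
        rw [hfinal, hpow]; ring
      have hu := IsUnit.map (MvPolynomial.eval (fun _ => (0 : ℂ))) (hsq (X 0) hdvd)
      rw [MvPolynomial.eval_X] at hu
      exact not_isUnit_zero hu
    · by_contra hcon
      push_neg at hcon
      have hpow : (X 1 : MvPolynomial (Fin 2) ℂ) ^ l = X 1 ^ (l - 2) * X 1 ^ 2 := by
        rw [← pow_add]; congr 1; omega
      have hdvd : (X 1 : MvPolynomial (Fin 2) ℂ) * X 1 ∣ p := by
        refine ⟨C (cs 0) * X 0 ^ e * X 1 ^ (l - 2) *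
          ∏ i, (X 1 ^ a - C (α i) * X 0 ^ b), ?_⟩
        rw [hfinal, hpow]; ring
      have hu := IsUnit.map (MvPolynomial.eval (fun _ => (0 : ℂ))) (hsq (X 1) hdvd)
      rw [MvPolynomial.eval_X] at hu
      exact not_isUnit_zero hu
    · intro i j hij
      by_contra hne
      have hjmem : j ∈ Finset.univ.erase i :=
        Finset.mem_erase.mpr ⟨fun h => hne h.symm, Finset.mem_univ j⟩
      have h1 : ∏ i', ((X 1 : MvPolynomial (Fin 2) ℂ) ^ a - C (α i') * X 0 ^ b)
          = ((X 1 : MvPolynomial (Fin 2) ℂ) ^ a - C (α i) * X 0 ^ b) *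
            ∏ i' ∈ Finset.univ.erase i, ((X 1 : MvPolynomial (Fin 2) ℂ) ^ a - C (α i') * X 0 ^ b) :=
        (Finset.mul_prod_erase _ _ (Finset.mem_univ i)).symm
      have h2 : ∏ i' ∈ Finset.univ.erase i, ((X 1 : MvPolynomial (Fin 2) ℂ) ^ a - C (α i') * X 0 ^ b)
          = ((X 1 : MvPolynomial (Fin 2) ℂ) ^ a - C (α j) * X 0 ^ b) *
            ∏ i' ∈ (Finset.univ.erase i).erase j, ((X 1 : MvPolynomial (Fin 2) ℂ) ^ a - C (α i') * X 0 ^ b) :=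
        (Finset.mul_prod_erase _ _ hjmem).symm
      have hdvd : (X 1 ^ a - C (α i) * X 0 ^ b) * (X 1 ^ a - C (α i) * X 0 ^ b) ∣ p := by
        refine ⟨C (cs 0) * X 0 ^ e * X 1 ^ l *
          ∏ i' ∈ (Finset.univ.erase i).erase j, (X 1 ^ a - C (α i') * X 0 ^ b), ?_⟩
        rw [hfinal, h1, h2, ← hij]
        ring
      have hu := hsq _ hdvd
      have hmap := IsUnit.map (MvPolynomial.aeval
        (fun t : Fin 2 => if t = 0 then 0 else (Polynomial.X : Polynomial ℂ))) hu
      have himg : MvPolynomial.aeval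
          (fun t : Fin 2 => if t = 0 then 0 else (Polynomial.X : Polynomial ℂ))
          ((X 1 : MvPolynomial (Fin 2) ℂ) ^ a - C (α i) * X 0 ^ b)
          = Polynomial.X ^ a := by
        simp [zero_pow hb.ne']
      rw [himg] at hmap
      have hdeg := Polynomial.natDegree_eq_zero_of_isUnit hmap
      rw [Polynomial.natDegree_X_pow] at hdeg
      omega
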